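/- (Monotone speed with constant drift) Let K : ℝ^d → ℝ be non-negative and integrable, let c ∈ ℝ, and for a measurable set E define the drifted thresholding T_{K,c} E := {x ∈ ℝ^d : (K ∗ χ_E)(x) > 1/2 − c}. Let E₀ ⊆ ℝ^d be measurable and set E₁ := T_{K,c} E₀, E₂ := T_{K,c} E₁. If E₁ ⊆ E₀, then E₂ ⊆ E₁ and inf{ |x − y| : x ∈ E₂, y ∈ frontier(E₁) } ≥ inf{ |x − y| : x ∈ E₁, y ∈ frontier(E₀) } (infimum over the empty set is +∞). -/

import Mathlib

open MeasureTheory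
open scoped ENNReal

/-- The convolution of a kernel `K` with the indicator function of a set `E`. -/
noncomputable def conv {d : ℕ} (K : EuclideanSpace ℝ (Fin d) → ℝ)
    (E : Set (EuclideanSpace ℝ (Fin d))) (x : EuclideanSpace ℝ (Fin d)) : ℝ :=
  ∫ y, K (x - y) * E.indicator (fun _ => (1 : ℝ)) y

/-- The thresholding operator with constant drift `c`:
    `T_{K,c} E = {x | (K ∗ χ_E)(x) > 1/2 − c}`. -/
def threshDrift {d : ℕ} (K : EuclideanSpace ℝ (Fin d) → ℝ) (c : ℝ)
    (E : Set (EuclideanSpace ℝ (Fin d))) : Set (EuclideanSpace ℝ (Fin d)) :=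
  {x | 1 / 2 - c < conv K E x}

private lemma aux_integrable {d : ℕ} {K : EuclideanSpace ℝ (Fin d) → ℝ}
    (hKint : Integrable K) {B : Set (EuclideanSpace ℝ (Fin d))} (hB : MeasurableSet B)
    (x : EuclideanSpace ℝ (Fin d)) :
    Integrable (fun y => K (x - y) * B.indicator (fun _ => (1 : ℝ)) y) := by
  have h1 : Integrable (fun y : EuclideanSpace ℝ (Fin d) => K (x - y)) :=
    hKint.comp_sub_left x
  have h2 : Integrable (B.indicator fun y : EuclideanSpace ℝ (Fin d) => K (x - y)) :=
    h1.indicator hB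
  refine h2.congr (Filter.Eventually.of_forall fun y => ?_)
  by_cases hy : y ∈ B <;> simp [Set.indicator, hy]

private lemma aux_nonneg {d : ℕ} {K : EuclideanSpace ℝ (Fin d) → ℝ}
    (hK0 : ∀ x, 0 ≤ K x) {B : Set (EuclideanSpace ℝ (Fin d))}
    (x y : EuclideanSpace ℝ (Fin d)) :
    0 ≤ K (x - y) * B.indicator (fun _ => (1 : ℝ)) y := by
  apply mul_nonneg (hK0 _)
  exact Set.indicator_nonneg (fun _ _ => zero_le_one) y

/-- Monotonicity of the convolution under a set-translation inclusion. -/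
private lemma conv_le_conv_add {d : ℕ} {K : EuclideanSpace ℝ (Fin d) → ℝ}
    (hK0 : ∀ x, 0 ≤ K x) (hKint : Integrable K)
    {A B : Set (EuclideanSpace ℝ (Fin d))} (hB : MeasurableSet B)
    (v : EuclideanSpace ℝ (Fin d)) (hAB : ∀ z ∈ A, z + v ∈ B)
    (x : EuclideanSpace ℝ (Fin d)) :
    conv K A x ≤ conv K B (x + v) := by
  have hrw : conv K B (x + v)
      = ∫ z, K (x - z) * B.indicator (fun _ => (1 : ℝ)) (z + v) := by
    rw [conv, ← integral_add_right_eq_self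
        (fun y => K (x + v - y) * B.indicator (fun _ => (1 : ℝ)) y) v]
    congr 1
    funext z
    congr 2
    abel
  rw [hrw]
  refine integral_mono_of_nonneg (Filter.Eventually.of_forall fun y => aux_nonneg hK0 x y)
    ?_ (Filter.Eventually.of_forall fun z => ?_)
  · have := (aux_integrable hKint hB (x + v)).comp_add_right v
    refine this.congr (Filter.Eventually.of_forall fun z => ?_)
    congr 2
    abel
  · dsimp only
    by_cases hz : z ∈ A
    · have hz' : z + v ∈ B := hAB z hz
      rw [Set.indicator_of_mem hz, Set.indicator_of_mem hz']
    · rw [Set.indicator_of_notMem hz, mul_zero]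
      exact mul_nonneg (hK0 _) (Set.indicator_nonneg (fun _ _ => zero_le_one) _)

private lemma conv_mono {d : ℕ} {K : EuclideanSpace ℝ (Fin d) → ℝ}
    (hK0 : ∀ x, 0 ≤ K x) (hKint : Integrable K)
    {A B : Set (EuclideanSpace ℝ (Fin d))} (hB : MeasurableSet B)
    (hAB : A ⊆ B) (x : EuclideanSpace ℝ (Fin d)) :
    conv K A x ≤ conv K B x := by
  have := conv_le_conv_add hK0 hKint hB 0 (fun z hz => by simpa using hAB hz) x
  simpa using this

/-- A preconnected set meeting both a set and its complement meets the frontier. -/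
private lemma preconnected_inter_frontier {X : Type*} [TopologicalSpace X]
    {s t : Set X} (hs : IsPreconnected s) {a b : X} (ha : a ∈ s) (hat : a ∈ t)
    (hb : b ∈ s) (hbt : b ∉ t) : (s ∩ frontier t).Nonempty := by
  by_contra h
  rw [Set.not_nonempty_iff_eq_empty] at h
  have hsub : s ⊆ interior t ∪ interior tᶜ := by
    intro p hp
    have hpf : p ∉ frontier t := fun hf => Set.eq_empty_iff_forall_notMem.1 h p ⟨hp, hf⟩
    by_cases hpi : p ∈ interior t
    · exact Or.inl hpi
    · right
      rw [interior_compl]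
      intro hpc
      exact hpf ⟨hpc, hpi⟩
  have ha' : a ∈ s ∩ interior t := by
    refine ⟨ha, ?_⟩
    rcases hsub ha with h1 | h1
    · exact h1
    · exact absurd (interior_subset h1) (by simpa using hat)
  have hb' : b ∈ s ∩ interior tᶜ := by
    refine ⟨hb, ?_⟩
    rcases hsub hb with h1 | h1
    · exact absurd (interior_subset h1) hbt
    · exact h1
  obtain ⟨p, -, hp1, hp2⟩ := hs (interior t) (interior tᶜ) isOpen_interior isOpen_interior
    hsub ⟨a, ha'⟩ ⟨b, hb'⟩
  exact (interior_subset hp2) (interior_subset hp1)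

/-- Monotone speed of contracting sets for thresholding with constant drift:
    if `E₁ = T_{K,c} E₀ ⊆ E₀`, then `E₂ = T_{K,c} E₁ ⊆ E₁` and
    `dist(E₂, ∂E₁) ≥ dist(E₁, ∂E₀)`, where distances are infima in `[0,∞]` (the infimum
    over the empty set being `+∞`). -/
theorem monotone_speed_with_drift
    {d : ℕ} (K : EuclideanSpace ℝ (Fin d) → ℝ)
    (hK0 : ∀ x, 0 ≤ K x) (hKint : Integrable K) (c : ℝ)
    (E₀ : Set (EuclideanSpace ℝ (Fin d))) (hE₀ : MeasurableSet E₀)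
    (hcontract : threshDrift K c E₀ ⊆ E₀) :
    threshDrift K c (threshDrift K c E₀) ⊆ threshDrift K c E₀ ∧
    (⨅ x ∈ threshDrift K c E₀, ⨅ y ∈ frontier E₀, edist x y) ≤
      ⨅ x ∈ threshDrift K c (threshDrift K c E₀),
        ⨅ y ∈ frontier (threshDrift K c E₀), edist x y := by
  set E₁ := threshDrift K c E₀ with hE₁def
  set E₂ := threshDrift K c E₁ with hE₂def
  have hsub : E₂ ⊆ E₁ := by
    intro x hx
    have h1 : conv K E₁ x ≤ conv K E₀ x := conv_mono hK0 hKint hE₀ hcontract x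
    exact lt_of_lt_of_le hx h1
  refine ⟨hsub, ?_⟩
  set δ : ℝ≥0∞ := ⨅ x ∈ E₁, ⨅ y ∈ frontier E₀, edist x y with hδdef
  -- every point of E₁ is at edist ≥ δ from the frontier of E₀
  have hδ_le : ∀ z ∈ E₁, ∀ p ∈ frontier E₀, δ ≤ edist z p := by
    intro z hz p hp
    calc δ ≤ ⨅ y ∈ frontier E₀, edist z y := biInf_le _ hz
    _ ≤ edist z p := biInf_le _ hp
  -- translation stability: z ∈ E₁, (‖v‖₊ : ℝ≥0∞) < δ ⇒ z + v ∈ E₀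
  have htrans : ∀ v : EuclideanSpace ℝ (Fin d), (‖v‖₊ : ℝ≥0∞) < δ → ∀ z ∈ E₁, z + v ∈ E₀ := by
    intro v hv z hz
    by_contra hzv
    have hseg : IsPreconnected (segment ℝ z (z + v)) := (convex_segment z (z + v)).isPreconnected
    obtain ⟨p, hpseg, hpf⟩ := preconnected_inter_frontier hseg (left_mem_segment ℝ z (z + v))
      (hcontract hz) (right_mem_segment ℝ z (z + v)) hzv
    have hd : dist z p ≤ dist z (z + v) := by
      have := dist_add_dist_of_mem_segment hpseg
      linarith [dist_nonneg (x := p) (y := z + v)]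
    have hd2 : edist z p ≤ (‖v‖₊ : ℝ≥0∞) := by
      rw [edist_dist, ← enorm_eq_nnnorm, ← ofReal_norm]
      have hdv : dist z (z + v) = ‖v‖ := by
        rw [dist_eq_norm]
        simp
      exact ENNReal.ofReal_le_ofReal (hdv ▸ hd)
    exact absurd (le_trans (hδ_le z hz p hpf) hd2) (not_le.2 hv)
  -- points of E₂ stay in E₁ after translation by small vectors
  have htrans2 : ∀ v : EuclideanSpace ℝ (Fin d), (‖v‖₊ : ℝ≥0∞) < δ → ∀ x ∈ E₂, x + v ∈ E₁ := by
    intro v hv x hx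
    have h1 : conv K E₁ x ≤ conv K E₀ (x + v) :=
      conv_le_conv_add hK0 hKint hE₀ v (fun z hz => htrans v hv z hz) x
    exact lt_of_lt_of_le hx h1
  -- conclude
  simp only [le_iInf_iff]
  intro x hx y hy
  -- ball of radius δ around x is contained in E₁
  have hball : EMetric.ball x δ ⊆ E₁ := by
    intro w hw
    have h1 : (‖w - x‖₊ : ℝ≥0∞) < δ := by
      rw [← enorm_eq_nnnorm, ← edist_eq_enorm_sub]
      exact EMetric.mem_ball.1 hw
    have := htrans2 (w - x) h1 x hx
    simpa using this
  have hclos : closure E₁ᶜ ⊆ (EMetric.ball x δ)ᶜ :=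
    closure_minimal (Set.compl_subset_compl.2 hball) (EMetric.isOpen_ball.isClosed_compl)
  have hy2 : y ∈ closure E₁ᶜ := (frontier_eq_closure_inter_closure (s := E₁) ▸ hy).2
  have : y ∉ Metric.eball x δ := hclos hy2
  rw [Metric.mem_eball, edist_comm] at this
  exact not_lt.1 this
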